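/- Let ⟨e_γ : γ → ω | γ < ω₁⟩ be a family of finite-to-one functions that is coherent (for all α < β < ω₁ the set {ξ < α : e_β(ξ) ≠ e_α(ξ)} is finite) and nontrivial (no e : ω₁ → ω satisfies that {ξ < α : e(ξ) ≠ e_α(ξ)} is finite for every α < ω₁). For each γ < ω₁ define τ_γ : ω × γ → ℤ by τ_γ(i,ξ) = 1 if e_γ(ξ) = i and τ_γ(i,ξ) = 0 otherwise. Then for every function φ : ω × ω₁ → ℤ there exist γ < ω₁, an infinite set Y ⊆ ω, and ordinals α_k < γ for k ∈ Y such that τ_γ(k, α_k) ≠ φ(k, α_k) for every k ∈ Y. -/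

import Mathlib

open Cardinal

theorem stmt_4 (e : Ordinal → Ordinal → ℕ)
    (hfto : ∀ γ < (aleph 1).ord, ∀ n : ℕ, {ξ : Ordinal | ξ < γ ∧ e γ ξ = n}.Finite)
    (hcoh : ∀ α β : Ordinal, α < β → β < (aleph 1).ord →
      {ξ : Ordinal | ξ < α ∧ e β ξ ≠ e α ξ}.Finite)
    (hnontriv : ¬ ∃ f : Ordinal → ℕ, ∀ α < (aleph 1).ord,
      {ξ : Ordinal | ξ < α ∧ f ξ ≠ e α ξ}.Finite)
    (tau : Ordinal → ℕ → Ordinal → ℤ)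
    (htau : ∀ γ i ξ, tau γ i ξ = if e γ ξ = i then 1 else 0)
    (phi : ℕ → Ordinal → ℤ) :
    ∃ γ < (aleph 1).ord, ∃ Y : Set ℕ, Y.Infinite ∧ ∃ a : ℕ → Ordinal,
      ∀ k ∈ Y, a k < γ ∧ tau γ k (a k) ≠ phi k (a k) := by
  classical
  set ω₁ := (aleph 1).ord with hω₁
  have hlim : Order.IsSuccLimit ω₁ := isSuccLimit_ord (aleph0_le_aleph 1)
  -- the "bad" set of columns for each γ
  set S : Ordinal → Set ℕ := fun γ => {k | ∃ ξ, ξ < γ ∧ tau γ k ξ ≠ phi k ξ} with hS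
  by_cases hfin : ∀ γ < ω₁, (S γ).Finite
  · -- derive a contradiction with nontriviality
    exfalso
    -- find a finite set s such that S γ ⊆ s for unboundedly many γ
    have claim : ∃ s : Finset ℕ, ∀ α < ω₁, ∃ γ, α < γ ∧ γ < ω₁ ∧ S γ ⊆ ↑s := by
      by_contra hcon
      push_neg at hcon
      choose b hb using hcon
      obtain ⟨α₀, hα₀⟩ : ∃ α₀ < ω₁, ∀ s : Finset ℕ, b s < α₀ := by
        refine ⟨(⨆ s : Finset ℕ, (b s + 1)) , ?_, ?_⟩
        · refine iSup_lt_ord_lift_of_isRegular isRegular_aleph_one ?_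
            fun s : Finset ℕ => hlim.succ_lt (hb s).1
          calc Cardinal.lift #(Finset ℕ) ≤ ℵ₀ := by simp
            _ < ℵ₁ := aleph0_lt_aleph_one
        · intro s
          exact (Order.lt_succ _).trans_le (le_ciSup (Ordinal.bddAbove_range _) s)
      obtain ⟨hα₀1, hα₀2⟩ := hα₀
      have hfin0 : (S α₀).Finite := hfin α₀ hα₀1
      exact (hb hfin0.toFinset).2 α₀ (hα₀2 _) hα₀1 (by simp)
    obtain ⟨s, hs⟩ := claim
    -- define the trivializing function
    set f : Ordinal → ℕ := fun ξ =>
      if h : ∃ k, k ∉ s ∧ phi k ξ = 1 then h.choose else 0 with hf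
    apply hnontriv
    refine ⟨f, fun α hα => ?_⟩
    obtain ⟨γ, hαγ, hγ, hSγ⟩ := hs α hα
    have hcov : {ξ : Ordinal | ξ < α ∧ f ξ ≠ e α ξ} ⊆
        {ξ : Ordinal | ξ < α ∧ e γ ξ ≠ e α ξ} ∪ ⋃ k ∈ s, {ξ : Ordinal | ξ < γ ∧ e γ ξ = k} := by
      rintro ξ ⟨hξα, hne⟩
      by_cases h1 : e γ ξ = e α ξ
      · -- then e γ ξ ∈ s, else f ξ = e γ ξ
        by_cases h2 : e γ ξ ∈ s
        · exact Or.inr (Set.mem_biUnion h2 ⟨hξα.trans hαγ, rfl⟩)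
        · exfalso
          have hξγ : ξ < γ := hξα.trans hαγ
          have hnotS : e γ ξ ∉ S γ := fun h => h2 (hSγ h)
          simp only [hS, Set.mem_setOf_eq, not_exists, not_and, not_not] at hnotS
          have hphi1 : phi (e γ ξ) ξ = 1 := by
            have := hnotS ξ hξγ
            rw [htau] at this
            simp at this
            omega
          have hex : ∃ k, k ∉ s ∧ phi k ξ = 1 := ⟨e γ ξ, h2, hphi1⟩
          have hch := hex.choose_spec
          have : hex.choose = e γ ξ := by
            by_contra hne'
            have hnotS' : hex.choose ∉ S γ := fun h => hch.1 (hSγ h)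
            simp only [hS, Set.mem_setOf_eq, not_exists, not_and, not_not] at hnotS'
            have := hnotS' ξ hξγ
            rw [htau, hch.2] at this
            simp only [if_neg (fun h : e γ ξ = hex.choose => hne' h.symm)] at this
            exact absurd this (by norm_num)
          apply hne
          have hfξ : f ξ = hex.choose := dif_pos hex
          rw [hfξ, this]
          exact h1
      · exact Or.inl ⟨hξα, h1⟩
    refine Set.Finite.subset ?_ hcov
    refine Set.Finite.union (hcoh α γ hαγ hγ) ?_
    exact Set.Finite.biUnion s.finite_toSet fun k _ => hfto γ hγ k
  · -- some S γ is infinite: take Y = S γ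
    push_neg at hfin
    obtain ⟨γ, hγ, hinf⟩ := hfin
    refine ⟨γ, hγ, S γ, hinf, fun k =>
      if h : ∃ ξ, ξ < γ ∧ tau γ k ξ ≠ phi k ξ then h.choose else 0, fun k hk => ?_⟩
    simp only [hS, Set.mem_setOf_eq] at hk
    simpa [dif_pos hk] using hk.choose_spec
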